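/- Let (Γ, d) be a countable metric space, 𝓛 a dissipative interaction, Λ ⊂ Γ finite, and π a state on 𝒜_Λ that is a local dynamical fixed-point of 𝓛 with convergence governed by g_Λ (i.e., π∘T_t^Λ = π for all t and |(π − ω)(T_t^Λ(A))| ≤ g_Λ(t)‖A‖ for all states ω and all A). Then for any X, Y ⊂ Λ with d(X,Y) > 0, any A ∈ 𝒜_X, B ∈ 𝒜_Y, any state ω on 𝒜_Λ, and any t ≥ 0: |π(AB) − π(A)π(B)| ≤ |ω(T_t^Λ(A·B_t^ω))| + 3‖A‖‖B‖ g_Λ(t), where B_t^ω := B − ω(T_t^Λ(B))·1. -/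

import Mathlib

open scoped ComplexOrder

set_option synthInstance.maxHeartbeats 1000000
set_option maxHeartbeats 1000000

/-- A state on `B(H)`: a unital positive continuous linear functional. -/
def IsQState' {H : Type*} [NormedAddCommGroup H] [InnerProductSpace ℂ H]
    [FiniteDimensional ℂ H] (φ : (H →L[ℂ] H) →L[ℂ] ℂ) : Prop :=
  φ 1 = 1 ∧ ∀ a : H →L[ℂ] H, 0 ≤ φ (star a * a)

section Aux

open scoped InnerProductSpace

variable {H : Type*} [NormedAddCommGroup H] [InnerProductSpace ℂ H] [FiniteDimensional ℂ H]

/-- The operator `‖a‖² • 1 - a⋆a` is positive. -/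
lemma aux_opPos (a : H →L[ℂ] H) :
    ((((‖a‖ ^ 2 : ℝ)) : ℂ) • (1 : H →L[ℂ] H) - star a * a).IsPositive := by
  rw [ContinuousLinearMap.isPositive_def']
  constructor
  · rw [IsSelfAdjoint]
    simp [star_smul, Complex.conj_ofReal, star_mul]
  · intro x
    rw [ContinuousLinearMap.reApplyInnerSelf]
    have h1 : ((((‖a‖ ^ 2 : ℝ)) : ℂ) • (1 : H →L[ℂ] H) - star a * a) x
        = (((‖a‖ ^ 2 : ℝ)) : ℂ) • x - (ContinuousLinearMap.adjoint a) (a x) := by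
      simp [ContinuousLinearMap.star_eq_adjoint, ContinuousLinearMap.mul_apply]
    rw [h1, inner_sub_left, inner_smul_left, ContinuousLinearMap.adjoint_inner_left,
      inner_self_eq_norm_sq_to_K]
    have h2 : ⟪a x, a x⟫_ℂ = ((‖a x‖ : ℂ)) ^ 2 := inner_self_eq_norm_sq_to_K (a x)
    rw [h2]
    have hax : ‖a x‖ ≤ ‖a‖ * ‖x‖ := a.le_opNorm x
    simp [Complex.conj_ofReal, ← Complex.ofReal_pow, ← Complex.ofReal_mul, ← Complex.ofReal_sub]
    nlinarith [norm_nonneg x, norm_nonneg (a x), norm_nonneg a]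

/-- A state is nonnegative on nonnegative operators. -/
lemma aux_qstate_nonneg {φ : (H →L[ℂ] H) →L[ℂ] ℂ} (hφ : IsQState' φ)
    {x : H →L[ℂ] H} (hx : 0 ≤ x) : 0 ≤ φ x := by
  rw [StarOrderedRing.nonneg_iff] at hx
  induction hx using AddSubmonoid.closure_induction with
  | mem y hy => obtain ⟨s, rfl⟩ := hy; exact hφ.2 s
  | zero => simp
  | add a b _ _ ha hb => rw [map_add]; exact add_nonneg ha hb

/-- A state is norm-bounded by `1`: `|φ(a)| ≤ ‖a‖`. -/
lemma aux_qstate_abs_le {φ : (H →L[ℂ] H) →L[ℂ] ℂ} (hφ : IsQState' φ) (a : H →L[ℂ] H) :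
    ‖φ a‖ ≤ ‖a‖ := by
  set z := φ a with hzdef
  set w := φ (star a) with hwdef
  set S := φ (star a * a) with hSdef
  have hq : ∀ c : ℂ, 0 ≤ S - c * w - (starRingEnd ℂ c) * z + (starRingEnd ℂ c) * c := by
    intro c
    have hexp : star (a - c • 1) * (a - c • 1)
        = star a * a - c • star a - (starRingEnd ℂ c) • a
          + ((starRingEnd ℂ c) * c) • (1 : H →L[ℂ] H) := by
      simp [star_sub, star_smul, sub_mul, mul_sub, smul_mul_assoc, mul_smul_comm, smul_smul,
        Complex.star_def]
      module
    have h0 := hφ.2 (a - c • 1)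
    rw [hexp] at h0
    simpa [map_sub, map_add, map_smul, hφ.1, smul_eq_mul] using h0
  have hS0 := hq 0
  simp at hS0
  have hSle : 0 ≤ ((‖a‖ ^ 2 : ℝ) : ℂ) - S := by
    have := aux_qstate_nonneg hφ
      ((ContinuousLinearMap.nonneg_iff_isPositive _).mpr (aux_opPos a))
    simpa [map_sub, map_smul, hφ.1, smul_eq_mul] using this
  have h1 := hq 1
  have hI := hq Complex.I
  have hz := hq z
  rw [Complex.le_def] at h1 hI hz hS0 hSle
  simp [Complex.sub_re, Complex.sub_im, Complex.add_re, Complex.add_im, Complex.mul_re,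
    Complex.mul_im, Complex.I_re, Complex.I_im, Complex.ofReal_re, Complex.ofReal_im,
    Complex.conj_re, Complex.conj_im, ← Complex.ofReal_pow] at h1 hI hz hS0 hSle
  have habs : ‖z‖ ^ 2 = z.re ^ 2 + z.im ^ 2 := by
    rw [Complex.sq_norm, Complex.normSq_apply]; ring
  have hfin : ‖z‖ ^ 2 ≤ ‖a‖ ^ 2 := by
    rw [habs]
    nlinarith [h1.1, h1.2, hI.1, hI.2, hz.1, hz.2, hS0.1, hS0.2, hSle.1, hSle.2]
  have := Real.sqrt_le_sqrt hfin
  rwa [Real.sqrt_sq (norm_nonneg _), Real.sqrt_sq (norm_nonneg _)] at this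

end Aux

/-- Let `T_t^Λ` be the finite-volume irreversible (unital positive) dynamics
of a quantum spin system on a finite volume `Λ` (the local algebra `𝒜_Λ` realized as
`B(H)`), and `π` a local dynamical fixed point with convergence governed by `g`
(`π ∘ T_t = π` and `|(π − ω)(T_t A)| ≤ g t ‖A‖` for all states `ω` and observables `A`).
Then for any observables `A, B` (in particular any `A ∈ 𝒜_X`, `B ∈ 𝒜_Y` with
`d(X,Y) > 0`), any state `ω` and any `t ≥ 0`:
`|π(AB) − π(A)π(B)| ≤ |ω(T_t(A·B_t^ω))| + 3 ‖A‖ ‖B‖ g t`, where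
`B_t^ω = B − ω(T_t B)·1`. -/
theorem fixed_point_correlation_decay
    {H : Type*} [NormedAddCommGroup H] [InnerProductSpace ℂ H] [FiniteDimensional ℂ H]
    (T : ℝ → ((H →L[ℂ] H) →L[ℂ] (H →L[ℂ] H)))
    (hT0 : T 0 = 1)
    (hsemi : ∀ s t : ℝ, 0 ≤ s → 0 ≤ t → T (s + t) = T s ∘L T t)
    (hunital : ∀ t : ℝ, 0 ≤ t → T t 1 = 1)
    (hpos : ∀ t : ℝ, 0 ≤ t → ∀ a : H →L[ℂ] H, a.IsPositive → (T t a).IsPositive)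
    (π : (H →L[ℂ] H) →L[ℂ] ℂ) (hπ : IsQState' π)
    (hπfix : ∀ t : ℝ, 0 ≤ t → ∀ A : H →L[ℂ] H, π (T t A) = π A)
    (g : ℝ → ℝ) (hg : ∀ t : ℝ, 0 ≤ t → 0 ≤ g t ∧ g t ≤ 2)
    (hconv : ∀ ω : (H →L[ℂ] H) →L[ℂ] ℂ, IsQState' ω →
      ∀ A : H →L[ℂ] H, ∀ t : ℝ, 0 ≤ t →
        ‖π (T t A) - ω (T t A)‖ ≤ g t * ‖A‖) :
    ∀ A B : H →L[ℂ] H, ∀ ω : (H →L[ℂ] H) →L[ℂ] ℂ, IsQState' ω → ∀ t : ℝ, 0 ≤ t →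
      ‖π (A * B) - π A * π B‖ ≤
        ‖ω (T t (A * (B - ω (T t B) • 1)))‖ + 3 * ‖A‖ * ‖B‖ * g t := by
  intro A B ω hω t ht
  set β := ω (T t B) with hβdef
  set B' := B - β • (1 : H →L[ℂ] H) with hB'def
  set C := A * B' with hCdef
  -- `ω ∘ T t` is a state
  have hσ : IsQState' (ω.comp (T t)) := by
    constructor
    · simp [ContinuousLinearMap.comp_apply, hunital t ht, hω.1]
    · intro a
      have h2 : (T t (star a * a)).IsPositive :=
        hpos t ht _ ((ContinuousLinearMap.nonneg_iff_isPositive _).mp (star_mul_self_nonneg a))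
      simpa [ContinuousLinearMap.comp_apply] using
        aux_qstate_nonneg hω ((ContinuousLinearMap.nonneg_iff_isPositive _).mpr h2)
  have hβle : ‖β‖ ≤ ‖B‖ := by
    simpa [ContinuousLinearMap.comp_apply] using aux_qstate_abs_le hσ B
  have hB'le : ‖B'‖ ≤ 2 * ‖B‖ := by
    have h1 : ‖β • (1 : H →L[ℂ] H)‖ ≤ ‖β‖ := by
      have h0 : ‖β • (1 : H →L[ℂ] H)‖ ≤ ‖β‖ * ‖(1 : H →L[ℂ] H)‖ :=
        ContinuousLinearMap.opNorm_smul_le β (1 : H →L[ℂ] H)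
      have h1' : ‖(1 : H →L[ℂ] H)‖ ≤ 1 := by
        rw [ContinuousLinearMap.one_def]; exact ContinuousLinearMap.norm_id_le
      have h2' : ‖β‖ = ‖β‖ := rfl
      nlinarith [norm_nonneg β, norm_nonneg (β • (1 : H →L[ℂ] H))]
    calc ‖B - β • (1 : H →L[ℂ] H)‖ ≤ ‖B‖ + ‖β • (1 : H →L[ℂ] H)‖ := norm_sub_le _ _
      _ ≤ ‖B‖ + ‖B‖ := by
          have := le_trans h1 hβle
          linarith
      _ = 2 * ‖B‖ := by ring
  have hCle : ‖C‖ ≤ ‖A‖ * (2 * ‖B‖) :=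
    le_trans (norm_mul_le A B') (mul_le_mul_of_nonneg_left hB'le (norm_nonneg A))
  have hAB : A * B = C + β • A := by
    rw [hCdef, hB'def]
    simp [mul_sub, mul_smul_comm]
  have e1 : ‖π (T t C) - ω (T t C)‖ ≤ g t * ‖C‖ := hconv ω hω C t ht
  have e2 : ‖β - π B‖ ≤ g t * ‖B‖ := by
    have h := hconv ω hω B t ht
    rw [hπfix t ht B] at h
    rwa [norm_sub_rev] at h
  have eA : ‖π A‖ ≤ ‖A‖ := aux_qstate_abs_le hπ A
  have hkey : π (A * B) - π A * π B
      = (π (T t C) - ω (T t C)) + ω (T t C) + π A * (β - π B) := by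
    rw [hπfix t ht C, hAB, map_add, map_smul, smul_eq_mul]
    ring
  rw [hkey]
  calc ‖(π (T t C) - ω (T t C)) + ω (T t C) + π A * (β - π B)‖
      ≤ ‖(π (T t C) - ω (T t C)) + ω (T t C)‖
          + ‖π A * (β - π B)‖ := norm_add_le _ _
    _ ≤ ‖π (T t C) - ω (T t C)‖ + ‖ω (T t C)‖
          + ‖π A * (β - π B)‖ := by
        have := norm_add_le (π (T t C) - ω (T t C)) (ω (T t C))
        linarith
    _ ≤ g t * ‖C‖ + ‖ω (T t C)‖ + ‖A‖ * (g t * ‖B‖) := by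
        have h3 : ‖π A * (β - π B)‖ ≤ ‖A‖ * (g t * ‖B‖) := by
          rw [norm_mul]
          exact mul_le_mul eA e2 (norm_nonneg _) (norm_nonneg A)
        linarith
    _ ≤ ‖ω (T t C)‖ + 3 * ‖A‖ * ‖B‖ * g t := by
        nlinarith [(hg t ht).1, hCle, norm_nonneg A, norm_nonneg B]
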